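/- Let T be a 2-dimensional real inner product space with inner product J. Then the set { W⁻¹J : W ∈ End(T) self-adjoint positive with respect to J, tr W = 1 } equals { J + XJ : X ∈ End(T), det X = 1 } (intersected with positive symmetric forms). -/

import Mathlib

open scoped InnerProductSpace

private lemma mat_CH19 (M : Matrix (Fin 2) (Fin 2) ℝ) :
    M * M - (Matrix.trace M) • M + (M.det) • (1 : Matrix (Fin 2) (Fin 2) ℝ) = 0 := by
  ext i j
  fin_cases i <;> fin_cases j <;>
    simp [Matrix.mul_apply, Fin.sum_univ_two, Matrix.det_fin_two, Matrix.trace_fin_two,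
      Matrix.one_apply] <;> ring

private lemma mat_det_add19 (c : ℝ) (M : Matrix (Fin 2) (Fin 2) ℝ) :
    (c • (1 : Matrix (Fin 2) (Fin 2) ℝ) + M).det = c^2 + c * Matrix.trace M + M.det := by
  simp [Matrix.det_fin_two, Matrix.trace_fin_two, Matrix.one_apply]
  ring

section End
variable {T : Type*} [AddCommGroup T] [Module ℝ T] [Module.Finite ℝ T]

private lemma end_CH19 (hdim : Module.finrank ℝ T = 2) (A : Module.End ℝ T) :
    A * A - (LinearMap.trace ℝ T A) • A + (LinearMap.det A) • (1 : Module.End ℝ T) = 0 := by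
  classical
  let b := Module.finBasisOfFinrankEq ℝ T hdim
  apply (LinearMap.toMatrix b b).injective
  rw [map_zero, map_add, map_sub, LinearMap.toMatrix_mul, map_smul, map_smul,
    LinearMap.toMatrix_one, LinearMap.trace_eq_matrix_trace ℝ b,
    ← LinearMap.det_toMatrix b]
  exact mat_CH19 _

private lemma end_det_add19 (hdim : Module.finrank ℝ T = 2) (c : ℝ) (A : Module.End ℝ T) :
    LinearMap.det (c • (1 : Module.End ℝ T) + A)
      = c^2 + c * LinearMap.trace ℝ T A + LinearMap.det A := by
  classical
  let b := Module.finBasisOfFinrankEq ℝ T hdim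
  rw [← LinearMap.det_toMatrix b, map_add, map_smul, LinearMap.toMatrix_one,
    mat_det_add19, LinearMap.trace_eq_matrix_trace ℝ b, LinearMap.det_toMatrix]

private lemma end_trace_one19 (hdim : Module.finrank ℝ T = 2) :
    LinearMap.trace ℝ T (1 : Module.End ℝ T) = 2 := by
  rw [LinearMap.trace_one, hdim]; norm_num

/-- If `W` is invertible with trace 1, then `det (W⁻¹ - 1) = 1` (dim 2). -/
private lemma det_inv_sub_one19 (hdim : Module.finrank ℝ T = 2)
    {W Winv : Module.End ℝ T} (h1 : Winv * W = 1)
    (htr : LinearMap.trace ℝ T W = 1) :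
    LinearMap.det (Winv - 1) = 1 := by
  set d := LinearMap.det W with hd_def
  have hdmul : LinearMap.det Winv * d = 1 := by
    rw [hd_def, ← LinearMap.det_comp, ← Module.End.mul_eq_comp, h1,
      show (1 : Module.End ℝ T) = LinearMap.id from rfl, LinearMap.det_id]
  have hd : d ≠ 0 := by
    intro h; rw [h, mul_zero] at hdmul; exact zero_ne_one hdmul
  have hCH := end_CH19 hdim W
  rw [htr, one_smul] at hCH
  -- hCH : W * W - W + d • 1 = 0
  have hsmul : d • Winv = 1 - W := by
    have h := congrArg (fun Z => Winv * Z) hCH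
    simp only [mul_add, mul_sub, mul_smul_comm, ← mul_assoc, h1, mul_zero,
      one_mul, mul_one] at h
    -- h : W - 1 + d • Winv = 0
    linear_combination (norm := module) h
  have key : d • (Winv - 1) = (1 - d) • (1 : Module.End ℝ T) + (-W) := by
    rw [smul_sub, hsmul]; module
  have hdet := congrArg LinearMap.det key
  rw [LinearMap.det_smul, hdim, end_det_add19 hdim] at hdet
  have htrneg : LinearMap.trace ℝ T (-W) = -1 := by rw [map_neg, htr]
  have hdetneg : LinearMap.det (-W) = d := by
    have : (-W : Module.End ℝ T) = (-1 : ℝ) • W := by module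
    rw [this, LinearMap.det_smul, hdim]; norm_num; rfl
  rw [htrneg, hdetneg] at hdet
  have : d ^ 2 * LinearMap.det (Winv - 1) = d ^ 2 := by rw [hdet]; ring
  exact mul_left_cancel₀ (pow_ne_zero 2 hd) (by rw [this, mul_one])

end End

/-- Let `T` be a 2-dimensional real inner product space with
inner product `J`.  Identifying symmetric bilinear forms on `T*` with bilinear
forms `B` on `T` via `J`, the random limit
`{ W⁻¹J : W positive self-adjoint, tr W = 1 }` coincides with
`{ J + XJ : X ∈ End T, det X = 1 }` intersected with the positive symmetric
forms. -/
theorem stmt19 {T : Type*} [NormedAddCommGroup T] [InnerProductSpace ℝ T]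
    [FiniteDimensional ℝ T] (hdim : Module.finrank ℝ T = 2) :
    {B : T →ₗ[ℝ] T →ₗ[ℝ] ℝ | ∃ W : Module.End ℝ T,
        (∀ u v : T, ⟪W u, v⟫_ℝ = ⟪u, W v⟫_ℝ) ∧
        (∀ u : T, u ≠ 0 → 0 < ⟪W u, u⟫_ℝ) ∧
        LinearMap.trace ℝ T W = 1 ∧
        ∃ Winv : Module.End ℝ T, Winv * W = 1 ∧ W * Winv = 1 ∧
          ∀ u v : T, B u v = ⟪Winv u, v⟫_ℝ} =
    {B : T →ₗ[ℝ] T →ₗ[ℝ] ℝ |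
        (∃ X : Module.End ℝ T, LinearMap.det X = 1 ∧
          ∀ u v : T, B u v = ⟪u, v⟫_ℝ + ⟪X u, v⟫_ℝ) ∧
        (∀ u v : T, B u v = B v u) ∧
        (∀ u : T, u ≠ 0 → 0 < B u u)} := by
  ext B
  simp only [Set.mem_setOf_eq]
  constructor
  · rintro ⟨W, hsa, hpos, htr, Winv, hWinvW, hWWinv, hB⟩
    have hWWinv' : ∀ u : T, W (Winv u) = u := fun u => by
      have := LinearMap.ext_iff.mp hWWinv u
      simpa [Module.End.mul_apply] using this
    have hne : ∀ u : T, u ≠ 0 → Winv u ≠ 0 := by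
      intro u hu h0
      apply hu; rw [← hWWinv' u, h0, map_zero]
    refine ⟨⟨Winv - 1, det_inv_sub_one19 hdim hWinvW htr, fun u v => ?_⟩,
      fun u v => ?_, fun u hu => ?_⟩
    · rw [hB]
      have : Winv u = u + (Winv - 1) u := by
        simp [LinearMap.sub_apply]
      rw [this, inner_add_left]
    · rw [hB, hB]
      calc ⟪Winv u, v⟫_ℝ = ⟪Winv u, W (Winv v)⟫_ℝ := by rw [hWWinv']
        _ = ⟪W (Winv u), Winv v⟫_ℝ := (hsa _ _).symm
        _ = ⟪u, Winv v⟫_ℝ := by rw [hWWinv']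
        _ = ⟪Winv v, u⟫_ℝ := real_inner_comm _ _
    · rw [hB]
      calc (0:ℝ) < ⟪W (Winv u), Winv u⟫_ℝ := hpos _ (hne u hu)
        _ = ⟪Winv u, u⟫_ℝ := by rw [real_inner_comm, hWWinv']
  · rintro ⟨⟨X, hdet, hBX⟩, hsymm, hposB⟩
    set A : Module.End ℝ T := 1 + X with hA_def
    have hA : ∀ u v : T, B u v = ⟪A u, v⟫_ℝ := by
      intro u v
      rw [hBX]
      simp [hA_def, LinearMap.add_apply, inner_add_left]
    have hAsa : ∀ u v : T, ⟪A u, v⟫_ℝ = ⟪u, A v⟫_ℝ := by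
      intro u v
      rw [← hA, hsymm, hA, real_inner_comm]
    have hinj : Function.Injective A := by
      rw [← LinearMap.ker_eq_bot, LinearMap.ker_eq_bot']
      intro u h0
      by_contra hu
      have := hposB u hu
      rw [hA, h0, inner_zero_left] at this
      exact lt_irrefl 0 this
    have hsurj : Function.Surjective A := LinearMap.injective_iff_surjective.mp hinj
    set e : T ≃ₗ[ℝ] T := LinearEquiv.ofBijective A ⟨hinj, hsurj⟩ with he_def
    set W : Module.End ℝ T := (e.symm : T →ₗ[ℝ] T) with hW_def
    have hWA : ∀ u : T, W (A u) = u := fun u => e.symm_apply_apply u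
    have hAW : ∀ u : T, A (W u) = u := fun u => e.apply_symm_apply u
    have hWAmul : W * A = 1 := LinearMap.ext fun u => hWA u
    have hAWmul : A * W = 1 := LinearMap.ext fun u => hAW u
    have hWne : ∀ u : T, u ≠ 0 → W u ≠ 0 := by
      intro u hu h0
      apply hu; rw [← hAW u, h0, map_zero]
    -- trace W = 1
    have hdetA : LinearMap.det A = 2 + LinearMap.trace ℝ T X := by
      have : A = (1:ℝ) • (1 : Module.End ℝ T) + X := by rw [hA_def]; module
      rw [this, end_det_add19 hdim, hdet]; ring
    have htrA : LinearMap.trace ℝ T A = 2 + LinearMap.trace ℝ T X := by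
      rw [hA_def, map_add, end_trace_one19 hdim]
    have hdA : LinearMap.det A ≠ 0 := by
      intro h
      have : LinearMap.det W * LinearMap.det A = 1 := by
        rw [← LinearMap.det_comp, ← Module.End.mul_eq_comp, hWAmul,
          show (1 : Module.End ℝ T) = LinearMap.id from rfl, LinearMap.det_id]
      rw [h, mul_zero] at this; exact zero_ne_one this
    have hCH := end_CH19 hdim A
    have h2 : A - (LinearMap.trace ℝ T A) • 1 + (LinearMap.det A) • W = 0 := by
      have h := congrArg (fun Z => W * Z) hCH
      simp only [mul_add, mul_sub, mul_smul_comm, ← mul_assoc, hWAmul, mul_zero,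
        one_mul, mul_one] at h
      exact h
    have htrW : LinearMap.trace ℝ T W = 1 := by
      have h := congrArg (LinearMap.trace ℝ T) h2
      rw [map_add, map_sub, map_smul, map_smul, map_zero, end_trace_one19 hdim,
        htrA, smul_eq_mul, smul_eq_mul] at h
      have : LinearMap.det A * LinearMap.trace ℝ T W = LinearMap.det A := by
        rw [hdetA] at h ⊢; linarith
      exact mul_left_cancel₀ hdA (by rw [this, mul_one])
    refine ⟨W, ?_, ?_, htrW, A, hAWmul, hWAmul, fun u v => by rw [hA]⟩
    · intro u v
      calc ⟪W u, v⟫_ℝ = ⟪W u, A (W v)⟫_ℝ := by rw [hAW]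
        _ = ⟪A (W u), W v⟫_ℝ := (hAsa _ _).symm
        _ = ⟪u, W v⟫_ℝ := by rw [hAW]
    · intro u hu
      calc (0:ℝ) < B (W u) (W u) := hposB _ (hWne u hu)
        _ = ⟪A (W u), W u⟫_ℝ := hA _ _
        _ = ⟪W u, u⟫_ℝ := by rw [real_inner_comm, hAW]
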